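/- arXiv:2404.05017 — 4 statements merged into one kernel-verified Lean document; each statement's English description precedes it below -/
import Mathlib

section
/- In the setting of the previous statement, the reflection unit (e, 1_B) : (g : A → I B) → (m : X → I B) is a regular epimorphism in the comma category A ↓ I; hence (A ↓↣ I) is a regular epireflective subcategory of A ↓ I. -/
open CategoryTheory CategoryTheory.Limits

/-- The reflection unit `(e, 𝟙 B) : (g : A ⟶ I B) ⟶ (m : X ⟶ I B)`
in the comma category `A ↓ I`, where `g = e ≫ m`. -/
def reflectionUnit {A : Type u₁} {B : Type u₂} [Category.{v₁} A] [Category.{v₂} B]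
    {I : B ⥤ A} (c : Comma (𝟭 A) I) (X : A) (e : c.left ⟶ X) (m : X ⟶ I.obj c.right)
    (hfac : e ≫ m = c.hom) :
    c ⟶ ({ left := X, right := c.right, hom := m } : Comma (𝟭 A) I) where
  left := e
  right := 𝟙 c.right
  w := by simp [hfac]

/-- In a category `A` with (regular epi, mono)-factorizations, if `c.hom = e ≫ m`
is such a factorization, then the reflection unit `(e, 𝟙 B)` is a regular epimorphism
in the comma category `A ↓ I`; hence the full subcategory of monomorphisms
`(A ↓↣ I)` is a regular epireflective subcategory of `A ↓ I`. -/
theorem reflection_unit_regularEpi {A : Type u₁} {B : Type u₂}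
    [Category.{v₁} A] [Category.{v₂} B] (I : B ⥤ A)
    (hfact : ∀ {A₁ A₂ : A} (g : A₁ ⟶ A₂),
      ∃ (X : A) (e : A₁ ⟶ X) (m : X ⟶ A₂), Nonempty (RegularEpi e) ∧ Mono m ∧ e ≫ m = g)
    (c : Comma (𝟭 A) I) (X : A) (e : c.left ⟶ X) (m : X ⟶ I.obj c.right)
    (he : Nonempty (RegularEpi e)) (hm : Mono m) (hfac : e ≫ m = c.hom) :
    Nonempty (RegularEpi (reflectionUnit c X e m hfac)) := by
  obtain ⟨re⟩ := he
  haveI : Epi e := RegularEpi.epi e re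
  refine ⟨{
    W := ⟨re.W, c.right, re.left ≫ c.hom⟩
    left := ⟨re.left, 𝟙 c.right, by rw [CategoryTheory.Functor.map_id, Category.comp_id]; rfl⟩
    right := ⟨re.right, 𝟙 c.right, by
      rw [CategoryTheory.Functor.map_id, Category.comp_id]
      show re.right ≫ c.hom = re.left ≫ c.hom
      rw [← hfac, ← Category.assoc, ← Category.assoc, re.w]⟩
    w := by
      apply CommaMorphism.ext
      · exact re.w
      · rfl
    isColimit := Cofork.IsColimit.mk' _ (fun s => ?_) }⟩
  have hs : re.left ≫ s.π.left = re.right ≫ s.π.left := by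
    have := s.condition
    have h := congrArg CommaMorphism.left this
    simp only [Comma.comp_left] at h
    exact h
  let u' : X ⟶ s.pt.left := Cofork.IsColimit.desc re.isColimit s.π.left hs
  have hu : e ≫ u' = s.π.left := Cofork.IsColimit.π_desc' re.isColimit s.π.left hs
  refine ⟨⟨u', s.π.right, ?_⟩, ?_, ?_⟩
  · -- commuting square, cancel epi e
    show u' ≫ s.pt.hom = m ≫ I.map s.π.right
    rw [← cancel_epi e]
    calc e ≫ u' ≫ s.pt.hom = (e ≫ u') ≫ s.pt.hom := (Category.assoc _ _ _).symm
      _ = s.π.left ≫ s.pt.hom := by rw [hu]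
      _ = c.hom ≫ I.map s.π.right := s.π.w
      _ = (e ≫ m) ≫ I.map s.π.right := congrArg (fun t => t ≫ I.map s.π.right) hfac.symm
      _ = e ≫ m ≫ I.map s.π.right := Category.assoc _ _ _
  · apply CommaMorphism.ext
    · exact hu
    · show 𝟙 c.right ≫ s.π.right = s.π.right
      simp
  · intro q hq
    apply CommaMorphism.ext
    · have h := congrArg CommaMorphism.left hq
      simp only [Comma.comp_left] at h
      rw [← cancel_epi e]
      rw [hu]
      exact h
    · have h : 𝟙 c.right ≫ q.right = s.π.right := congrArg CommaMorphism.right hq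
      simpa [reflectionUnit] using h
end

section
/- Let V be a commutative unital quantale. For a set X with a family S of maps X → V, let a_S(x, y) = ⨅_{φ ∈ S} hom(φ(x), φ(y)) be the initial V-category structure. Then the set of V-functors from (X, a_S) to (V, hom) equals the closure of S under the operations: (i) every a_S(x, −) belongs to it; (ii) it is closed under the property ψ = ⋁_y ψ(y) ⊗ a_S(y, −). In particular, if S is closed under pointwise suprema, pointwise tensor by constants, and contains all a_S(x, −), then S = V-Cat((X, a_S), (V, hom)). -/
/-- The internal hom of a commutative quantale `V`: `hom u v = ⋁ {w | u ⊗ w ≤ v}`. -/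
def qhom {V : Type*} [CompleteLattice V] [CommMonoid V] (u v : V) : V :=
  sSup {w | u * w ≤ v}

/-- The initial `V`-category structure on `X` induced by a family `S` of maps `X → V`. -/
def initStruct {V : Type*} [CompleteLattice V] [CommMonoid V] {X : Type*}
    (S : Set (X → V)) (x y : X) : V :=
  ⨅ φ ∈ S, qhom (φ x) (φ y)

/-- A map `ψ : X → V` is a `V`-functor `(X, a) → (V, hom)`. -/
def IsVFunctor {V : Type*} [CompleteLattice V] [CommMonoid V] {X : Type*}
    (a : X → X → V) (ψ : X → V) : Prop :=
  ∀ y z : X, a y z ≤ qhom (ψ y) (ψ z)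

/-- For the initial structure `a_S`: the representables `a_S(x, −)` are `V`-functors,
every `φ ∈ S` is a `V`-functor, every `V`-functor `ψ` satisfies
`ψ = ⋁_y ψ(y) ⊗ a_S(y, −)`, and hence if `S` contains all representables and is closed
under pointwise suprema and pointwise tensor by constants, then `S` equals the set of
all `V`-functors `(X, a_S) → (V, hom)`. -/
theorem functors_from_initStruct {V : Type*} [CompleteLattice V] [CommMonoid V]
    (hadj : ∀ u v w : V, u * w ≤ v ↔ w ≤ qhom u v)
    {X : Type*} (S : Set (X → V))
    (hrep : ∀ x : X, (fun y => initStruct S x y) ∈ S)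
    (hsup : ∀ f : X → (X → V), (∀ y, f y ∈ S) → (fun x => ⨆ y, f y x) ∈ S)
    (htens : ∀ φ ∈ S, ∀ v : V, (fun x => v * φ x) ∈ S) :
    (∀ x : X, IsVFunctor (initStruct S) (fun y => initStruct S x y)) ∧
    (∀ φ ∈ S, IsVFunctor (initStruct S) φ) ∧
    (∀ ψ : X → V, IsVFunctor (initStruct S) ψ →
      ∀ z : X, ψ z = ⨆ y : X, ψ y * initStruct S y z) ∧
    S = {ψ : X → V | IsVFunctor (initStruct S) ψ} := by
  -- counit: `u * qhom u v ≤ v`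
  have hcounit : ∀ u v : V, u * qhom u v ≤ v := fun u v => (hadj u v _).2 le_rfl
  -- multiplication is monotone in the right argument
  have hmonoR : ∀ u w w' : V, w ≤ w' → u * w ≤ u * w' := by
    intro u w w' h
    exact (hadj u (u * w') w).2 (h.trans ((hadj u (u * w') w').1 le_rfl))
  have hmono2 : ∀ u u' w w' : V, u ≤ u' → w ≤ w' → u * w ≤ u' * w' := by
    intro u u' w w' hu hw
    calc u * w ≤ u * w' := hmonoR u w w' hw
    _ = w' * u := mul_comm _ _
    _ ≤ w' * u' := hmonoR w' u u' hu
    _ = u' * w' := mul_comm _ _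
  -- transitivity of the initial structure
  have htrans : ∀ x y z : X, initStruct S x y * initStruct S y z ≤ initStruct S x z := by
    intro x y z
    refine le_iInf₂ fun φ hφ => ?_
    have h1 : initStruct S x y ≤ qhom (φ x) (φ y) := iInf₂_le φ hφ
    have h2 : initStruct S y z ≤ qhom (φ y) (φ z) := iInf₂_le φ hφ
    refine (hadj _ _ _).1 ?_
    calc φ x * (initStruct S x y * initStruct S y z)
        ≤ φ x * (qhom (φ x) (φ y) * qhom (φ y) (φ z)) :=
          hmonoR _ _ _ (hmono2 _ _ _ _ h1 h2)
      _ = (φ x * qhom (φ x) (φ y)) * qhom (φ y) (φ z) := (mul_assoc _ _ _).symm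
      _ ≤ φ y * qhom (φ y) (φ z) := hmono2 _ _ _ _ (hcounit _ _) le_rfl
      _ ≤ φ z := hcounit _ _
  -- reflexivity
  have hrefl : ∀ z : X, (1 : V) ≤ initStruct S z z := by
    intro z
    refine le_iInf₂ fun φ hφ => (hadj _ _ _).1 ?_
    simp
  have part1 : ∀ x : X, IsVFunctor (initStruct S) (fun y => initStruct S x y) := by
    intro x y z
    exact (hadj _ _ _).1 (htrans x y z)
  have part2 : ∀ φ ∈ S, IsVFunctor (initStruct S) φ := by
    intro φ hφ y z
    exact iInf₂_le φ hφ
  have part3 : ∀ ψ : X → V, IsVFunctor (initStruct S) ψ →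
      ∀ z : X, ψ z = ⨆ y : X, ψ y * initStruct S y z := by
    intro ψ hψ z
    apply le_antisymm
    · calc ψ z = ψ z * 1 := (mul_one _).symm
        _ ≤ ψ z * initStruct S z z := hmonoR _ _ _ (hrefl z)
        _ ≤ ⨆ y : X, ψ y * initStruct S y z := le_iSup (fun y => ψ y * initStruct S y z) z
    · refine iSup_le fun y => ?_
      calc ψ y * initStruct S y z ≤ ψ y * qhom (ψ y) (ψ z) := hmonoR _ _ _ (hψ y z)
        _ ≤ ψ z := hcounit _ _
  refine ⟨part1, part2, part3, ?_⟩
  apply le_antisymm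
  · intro φ hφ
    exact part2 φ hφ
  · intro ψ hψ
    have h : ψ = fun z => ⨆ y : X, ψ y * initStruct S y z := funext fun z => part3 ψ hψ z
    rw [h]
    exact hsup (fun y => fun z => ψ y * initStruct S y z)
      (fun y => htens _ (hrep y) (ψ y))
end

section
/- For a commutative unital quantale V, the V-category (V, hom) is initially dense in V-Cat: for any V-category (X, a), the structure a is the initial structure with respect to the family of all V-functors (X, a) → (V, hom), i.e., a(x, y) = ⨅_{ψ ∈ V-Cat((X,a),(V,hom))} hom(ψ(x), ψ(y)). -/
/-- `(V, hom)` is initially dense in `V`-Cat: for every `V`-category `(X, a)`,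
`a(x, y) = ⨅_{ψ ∈ V-Cat((X,a),(V,hom))} hom(ψ x, ψ y)`. -/
theorem initially_dense {V : Type*} [CompleteLattice V] [CommMonoid V]
    (hadj : ∀ u v w : V, u * w ≤ v ↔ w ≤ qhom u v)
    {X : Type*} (a : X → X → V)
    (hrefl : ∀ x : X, 1 ≤ a x x)
    (htrans : ∀ x y z : X, a x y * a y z ≤ a x z) :
    ∀ x y : X,
      a x y = ⨅ ψ ∈ {ψ : X → V | ∀ y z : X, a y z ≤ qhom (ψ y) (ψ z)},
        qhom (ψ x) (ψ y) := by
  -- monotonicity of * derived from the adjunction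
  have hmul_right : ∀ u w w' : V, w' ≤ w → u * w' ≤ u * w := by
    intro u w w' h
    exact (hadj u (u * w) w').mpr (h.trans ((hadj u (u * w) w).mp le_rfl))
  have hmul_left : ∀ u u' w : V, u ≤ u' → u * w ≤ u' * w := by
    intro u u' w h
    have : u' ≤ qhom w (u' * w) := (hadj w (u' * w) u').mp (by rw [mul_comm])
    have := (hadj w (u' * w) u).mpr (h.trans this)
    rwa [mul_comm] at this
  intro x y
  apply le_antisymm
  · exact le_iInf fun ψ => le_iInf fun hψ => hψ x y
  · have hmem : (a x ·) ∈ {ψ : X → V | ∀ y z : X, a y z ≤ qhom (ψ y) (ψ z)} := by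
      intro y z
      exact (hadj (a x y) (a x z) (a y z)).mp (htrans x y z)
    refine le_trans (iInf₂_le _ hmem) ?_
    have h1 : a x x * qhom (a x x) (a x y) ≤ a x y :=
      (hadj (a x x) (a x y) _).mpr le_rfl
    calc qhom (a x x) (a x y) = 1 * qhom (a x x) (a x y) := (one_mul _).symm
      _ ≤ a x x * qhom (a x x) (a x y) := hmul_left _ _ _ (hrefl x)
      _ ≤ a x y := h1
end

section
/- Let V be a commutative unital quantale such that the forgetful structure makes each representable initial. For an affine set (X, S) over V (S a subalgebra of V^X closed under the pointwise operations of sups, tensors with constants, and infima of homs as needed), the assignments F(X, a) = (X, V-Cat((X,a), (V, hom))) and G(X, S) = (X, a_S) with a_S(x,y) = ⨅_{φ ∈ S} hom(φ(x), φ(y)) define mutually inverse bijections between V-category structures on X and such subalgebras of V^X; moreover these extend to an isomorphism of categories over Set. -/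
/-- `S` is an admissible subalgebra of `V^X`: it contains the representables of its
induced initial structure and is closed under pointwise suprema and pointwise tensor
by constants. -/
def Admissible {V : Type*} [CompleteLattice V] [CommMonoid V] {X : Type*}
    (S : Set (X → V)) : Prop :=
  (∀ x : X, (fun y => initStruct S x y) ∈ S) ∧
  (∀ f : X → (X → V), (∀ y, f y ∈ S) → (fun x => ⨆ y, f y x) ∈ S) ∧
  (∀ φ ∈ S, ∀ v : V, (fun x => v * φ x) ∈ S)

/-- The assignments `F(X, a) = (X, V-Cat((X,a),(V,hom)))` and `G(X, S) = (X, a_S)` are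
mutually inverse, and they identify `V`-functors with affine morphisms, giving a
concrete isomorphism `V-Cat ≅ AfSet(V)` over `Set`. -/
theorem vcat_iso_affineSets {V : Type*} [CompleteLattice V] [CommMonoid V]
    (hadj : ∀ u v w : V, u * w ≤ v ↔ w ≤ qhom u v) {X Y : Type u} :
    (∀ a : X → X → V, (∀ x, 1 ≤ a x x) → (∀ x y z, a x y * a y z ≤ a x z) →
      initStruct {ψ : X → V | IsVFunctor a ψ} = a) ∧
    (∀ S : Set (X → V), Admissible S → {ψ : X → V | IsVFunctor (initStruct S) ψ} = S) ∧
    (∀ (S : Set (X → V)) (T : Set (Y → V)), Admissible S → Admissible T →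
      ∀ f : X → Y,
        ((∀ x x' : X, initStruct S x x' ≤ initStruct T (f x) (f x')) ↔
          ∀ φ ∈ T, (φ ∘ f) ∈ S)) := by
  have mono : ∀ (u w w' : V), w ≤ w' → u * w ≤ u * w' := by
    intro u w w' h
    exact (hadj u (u * w') w).2 (h.trans ((hadj u (u * w') w').1 le_rfl))
  have key : ∀ S : Set (X → V), Admissible S →
      {ψ : X → V | IsVFunctor (initStruct S) ψ} = S := by
    intro S hS
    obtain ⟨hrep, hsup, hmul⟩ := hS
    ext ψ
    simp only [Set.mem_setOf_eq]
    constructor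
    · intro hψ
      have hform : ψ = fun z => ⨆ y, ψ y * initStruct S y z := by
        funext z
        apply le_antisymm
        · refine le_trans ?_ (le_iSup (fun y => ψ y * initStruct S y z) z)
          have h1 : (1 : V) ≤ initStruct S z z := by
            simp only [initStruct]
            refine le_iInf₂ fun φ _ => (hadj _ _ _).1 ?_
            simp [mul_one]
          calc ψ z = ψ z * 1 := (mul_one _).symm
            _ ≤ ψ z * initStruct S z z := mono _ _ _ h1
        · exact iSup_le fun y => (hadj _ _ _).2 (hψ y z)
      rw [hform]
      exact hsup _ (fun y => hmul _ (hrep y) (ψ y))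
    · intro hψ y z
      simp only [initStruct]
      exact iInf₂_le ψ hψ
  refine ⟨?_, key, ?_⟩
  · intro a h1 h2
    funext x y
    apply le_antisymm
    · have hfun : IsVFunctor a (a x) := fun y z => (hadj _ _ _).1 (h2 x y z)
      have step : initStruct {ψ : X → V | IsVFunctor a ψ} x y ≤ qhom (a x x) (a x y) := by
        simp only [initStruct]
        exact iInf₂_le (a x) hfun
      refine step.trans ?_
      have h3 : a x x * qhom (a x x) (a x y) ≤ a x y := (hadj _ _ _).2 le_rfl
      calc qhom (a x x) (a x y) = 1 * qhom (a x x) (a x y) := (one_mul _).symm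
        _ ≤ a x x * qhom (a x x) (a x y) := by
            rw [mul_comm (1 : V), mul_comm (a x x)]; exact mono _ _ _ (h1 x)
        _ ≤ a x y := h3
    · simp only [initStruct]
      exact le_iInf₂ fun ψ hψ => hψ x y
  · intro S T hS hT f
    constructor
    · intro h φ hφ
      have hfun : IsVFunctor (initStruct S) (φ ∘ f) := by
        intro y z
        refine (h y z).trans ?_
        simp only [initStruct]
        exact iInf₂_le φ hφ
      rw [← key S hS]
      exact hfun
    · intro h x x'
      simp only [initStruct]
      exact le_iInf₂ fun φ hφ => iInf₂_le (φ ∘ f) (h φ hφ)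
end
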